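/- The E-closure operator is idempotent: Cl_E(Cl_E(𝒯)) = Cl_E(𝒯) for every set 𝒯 of complete theories. -/
import Mathlib

open FirstOrder

/-- The E-closure of a family of theories: the family itself together with all
maximal (complete) theories each of whose sentences belongs to infinitely many
members of the family (Proposition 2.2 of the paper). -/
def ClE {L : Language} (𝒯 : Set L.Theory) : Set L.Theory :=
  𝒯 ∪ {T | T.IsMaximal ∧ ∀ φ ∈ T, {T' ∈ 𝒯 | φ ∈ T'}.Infinite}

/-- The E-closure operator is idempotent. -/
theorem ClE_idem {L : Language} (𝒯 : Set L.Theory)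
    (h : ∀ T ∈ 𝒯, T.IsMaximal) :
    ClE (ClE 𝒯) = ClE 𝒯 := by
  apply Set.Subset.antisymm
  · rintro T (hT | ⟨hmax, hφ⟩)
    · exact hT
    · right
      refine ⟨hmax, fun φ hφT => ?_⟩
      have hinf := hφ φ hφT
      by_contra hfin
      rw [Set.not_infinite] at hfin
      by_cases hex : ∃ T' : L.Theory, (T'.IsMaximal ∧ ∀ ψ ∈ T', {T'' ∈ 𝒯 | ψ ∈ T''}.Infinite) ∧ φ ∈ T'
      · obtain ⟨T', ⟨_, h2⟩, hφ'⟩ := hex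
        exact h2 φ hφ' hfin
      · apply hinf
        apply hfin.subset
        rintro T'' ⟨hm, hφ''⟩
        rcases hm with hm | hm
        · exact ⟨hm, hφ''⟩
        · exact absurd ⟨T'', hm, hφ''⟩ hex
  · exact Set.subset_union_left
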